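/- In the exponential example, the number of PAXp's (for δ = 1, class True, point v) is at least 2^m; hence the disjunction PAXpred over all PAXp's has size exponential in the number n = 2m+1 of features. -/
import Mathlib


open Finset

/-- The feature space of the exponential example with `n = 2m+1` features: the first
`2m` features have domain `{0,1}` and the last feature has domain `{0,1,n}`, encoded
as functions into `Fin 3` (with the value `2` of the last feature encoding `n`)
whose first `2m` coordinates are `< 2`. -/
abbrev ExpF (m : ℕ) :=
  {x : Fin (2 * m + 1) → Fin 3 // ∀ i : Fin (2 * m + 1), (i : ℕ) < 2 * m → (x i : ℕ) < 2}

/-- The classifier of the exponential example: `x` is classified `true` iff at least `m`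
of its first `2m` features have value `1` (i.e. the goal is reachable in one step). -/
def expκ (m : ℕ) (x : ExpF m) : Bool :=
  decide (m ≤ (Finset.univ.filter
    (fun i : Fin (2 * m + 1) => (i : ℕ) < 2 * m ∧ x.1 i = 1)).card)

/-- The specific point `v = (1,…,1,0)` of the exponential example. -/
def expv (m : ℕ) : ExpF m :=
  ⟨fun i => if (i : ℕ) < 2 * m then 1 else 0, by
    intro i h
    simp only [if_pos h]
    decide⟩

/-- `Prop(X)` in the exponential example: the proportion, among points agreeing with
`v` on `X`, of points classified `true`. -/
noncomputable def expProp (m : ℕ) (X : Finset (Fin (2 * m + 1))) : ℝ :=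
  ((Finset.univ.filter
      (fun x : ExpF m => (∀ i ∈ X, x.1 i = (expv m).1 i) ∧ expκ m x = true)).card : ℝ) /
  ((Finset.univ.filter (fun x : ExpF m => ∀ i ∈ X, x.1 i = (expv m).1 i)).card : ℝ)

/-- `X` is a weak PAXp (for threshold `δ = 1`, class `true`, point `v`) in the
exponential example. -/
def ExpIsWeakPAXp (m : ℕ) (X : Finset (Fin (2 * m + 1))) : Prop :=
  1 ≤ expProp m X

/-- `X` is a PAXp (subset-minimal weak PAXp) in the exponential example. -/
def ExpIsPAXp (m : ℕ) (X : Finset (Fin (2 * m + 1))) : Prop :=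
  ExpIsWeakPAXp m X ∧ ∀ Y ⊂ X, ¬ ExpIsWeakPAXp m Y

lemma weak_iff_forall (m : ℕ) (X : Finset (Fin (2 * m + 1))) :
    ExpIsWeakPAXp m X ↔
      ∀ x : ExpF m, (∀ i ∈ X, x.1 i = (expv m).1 i) → expκ m x = true := by
  classical
  unfold ExpIsWeakPAXp expProp
  set A := (Finset.univ.filter
      (fun x : ExpF m => (∀ i ∈ X, x.1 i = (expv m).1 i) ∧ expκ m x = true)) with hA
  set B := (Finset.univ.filter
      (fun x : ExpF m => ∀ i ∈ X, x.1 i = (expv m).1 i)) with hB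
  have hAB : A ⊆ B := by
    intro x hx
    simp only [hA, hB, mem_filter, mem_univ, true_and] at hx ⊢
    exact hx.1
  have hvB : expv m ∈ B := by
    simp [hB]
  have hBpos : 0 < B.card := card_pos.2 ⟨_, hvB⟩
  have hBpos' : (0:ℝ) < (B.card : ℝ) := by exact_mod_cast hBpos
  rw [one_le_div hBpos']
  constructor
  · intro h x hx
    have : (B.card : ℕ) ≤ A.card := by exact_mod_cast h
    have hEq : A = B := eq_of_subset_of_card_le hAB this
    have : x ∈ A := by rw [hEq]; simp only [hB, mem_filter, mem_univ, true_and]; exact hx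
    simp only [hA, mem_filter] at this
    exact this.2.2
  · intro h
    have hEq : A = B := by
      apply Subset.antisymm hAB
      intro x hx
      simp only [hA, hB, mem_filter, mem_univ, true_and] at hx ⊢
      exact ⟨hx, h x hx⟩
    rw [hEq]

lemma weak_iff_card (m : ℕ) (X : Finset (Fin (2 * m + 1))) :
    ExpIsWeakPAXp m X ↔ m ≤ (X.filter (fun i : Fin (2 * m + 1) => (i : ℕ) < 2 * m)).card := by
  classical
  rw [weak_iff_forall]
  constructor
  · intro h
    set y : ExpF m := ⟨fun i => if i ∈ X ∧ (i : ℕ) < 2 * m then 1 else 0, by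
      intro i _
      by_cases hc : i ∈ X ∧ (i : ℕ) < 2 * m
      · simp only [if_pos hc]; decide
      · simp only [if_neg hc]; decide⟩ with hy
    have hagree : ∀ i ∈ X, y.1 i = (expv m).1 i := by
      intro i hi
      simp only [hy, expv]
      by_cases hlt : (i : ℕ) < 2 * m
      · rw [if_pos ⟨hi, hlt⟩, if_pos hlt]
      · rw [if_neg (by tauto), if_neg hlt]
    have hk := h y hagree
    rw [expκ, decide_eq_true_iff] at hk
    have hset : (Finset.univ.filter
        (fun i : Fin (2 * m + 1) => (i : ℕ) < 2 * m ∧ y.1 i = 1)) =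
        X.filter (fun i : Fin (2 * m + 1) => (i : ℕ) < 2 * m) := by
      ext i
      simp only [mem_filter, mem_univ, true_and, hy]
      constructor
      · rintro ⟨hlt, h1⟩
        by_cases hiX : i ∈ X ∧ (i : ℕ) < 2 * m
        · exact ⟨hiX.1, hlt⟩
        · rw [if_neg hiX] at h1; exact absurd h1 (by decide)
      · rintro ⟨hiX, hlt⟩
        exact ⟨hlt, by rw [if_pos ⟨hiX, hlt⟩]⟩
    rwa [hset] at hk
  · intro h x hx
    rw [expκ, decide_eq_true_iff]
    refine le_trans h (card_le_card ?_)
    intro i hi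
    simp only [mem_filter, mem_univ, true_and] at hi ⊢
    refine ⟨hi.2, ?_⟩
    have := hx i hi.1
    rw [this]
    simp only [expv, if_pos hi.2]

lemma paxp_of (m : ℕ) (X : Finset (Fin (2 * m + 1)))
    (hsub : ∀ i ∈ X, (i : ℕ) < 2 * m) (hcard : X.card = m) : ExpIsPAXp m X := by
  constructor
  · rw [weak_iff_card, filter_eq_self.2 hsub, hcard]
  · intro Y hY hw
    rw [weak_iff_card] at hw
    have h1 : (Y.filter (fun i : Fin (2 * m + 1) => (i : ℕ) < 2 * m)).card ≤ Y.card :=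
      card_le_card (filter_subset _ _)
    have h2 : Y.card < X.card := card_lt_card hY
    omega

def expEmb1 (m : ℕ) (i : Fin m) : Fin (2 * m + 1) := ⟨i, by omega⟩
def expEmb2 (m : ℕ) (i : Fin m) : Fin (2 * m + 1) := ⟨i + m, by omega⟩

def expG (m : ℕ) (S : Finset (Fin m)) : Finset (Fin (2 * m + 1)) :=
  S.image (expEmb1 m) ∪ (Sᶜ).image (expEmb2 m)

lemma expEmb1_inj (m : ℕ) : Function.Injective (expEmb1 m) := by
  intro a b h
  simpa [expEmb1, Fin.ext_iff] using h

lemma expEmb2_inj (m : ℕ) : Function.Injective (expEmb2 m) := by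
  intro a b h
  simp only [expEmb2, Fin.ext_iff] at h ⊢
  omega

lemma expG_mem1 (m : ℕ) (S : Finset (Fin m)) (i : Fin m) :
    expEmb1 m i ∈ expG m S ↔ i ∈ S := by
  simp only [expG, mem_union, mem_image]
  constructor
  · rintro (⟨j, hj, hji⟩ | ⟨j, hj, hji⟩)
    · rwa [expEmb1_inj m hji] at hj
    · exfalso
      have := congrArg Fin.val hji
      simp only [expEmb1, expEmb2] at this
      omega
  · intro h; exact Or.inl ⟨i, h, rfl⟩

lemma expG_inj (m : ℕ) : Function.Injective (expG m) := by
  intro S T h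
  ext i
  rw [← expG_mem1 m S i, ← expG_mem1 m T i, h]

lemma expG_paxp (m : ℕ) (S : Finset (Fin m)) : ExpIsPAXp m (expG m S) := by
  apply paxp_of
  · intro i hi
    simp only [expG, mem_union, mem_image] at hi
    rcases hi with ⟨j, _, hji⟩ | ⟨j, _, hji⟩ <;>
      · subst hji; simp only [expEmb1, expEmb2]; omega
  · have hdisj : Disjoint (S.image (expEmb1 m)) ((Sᶜ).image (expEmb2 m)) := by
      rw [disjoint_left]
      intro a ha hb
      rw [mem_image] at ha hb
      obtain ⟨j, _, hj⟩ := ha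
      obtain ⟨k, _, hk⟩ := hb
      subst hj
      have := congrArg Fin.val hk
      simp only [expEmb1, expEmb2] at this
      omega
    rw [expG, card_union_of_disjoint hdisj,
      card_image_of_injective _ (expEmb1_inj m),
      card_image_of_injective _ (expEmb2_inj m), card_compl]
    have := card_le_univ S
    simp only [Fintype.card_fin] at *
    omega

/-- in the exponential example, the number of PAXp's (for `δ = 1`,
class `true`, point `v`) is at least `2^m`, hence exponential in the number
`n = 2m+1` of features. -/
theorem expPAXp_count_ge (m : ℕ) (hm : 1 ≤ m) :
    2 ^ m ≤ {X : Finset (Fin (2 * m + 1)) | ExpIsPAXp m X}.ncard := by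
  have hsub : Set.range (expG m) ⊆ {X : Finset (Fin (2 * m + 1)) | ExpIsPAXp m X} := by
    rintro X ⟨S, rfl⟩
    exact expG_paxp m S
  have h1 : (Set.range (expG m)).ncard = 2 ^ m := by
    rw [← Set.image_univ, Set.ncard_image_of_injective _ (expG_inj m),
      Set.ncard_univ, Nat.card_eq_fintype_card, Fintype.card_finset, Fintype.card_fin]
  calc 2 ^ m = (Set.range (expG m)).ncard := h1.symm
    _ ≤ _ := Set.ncard_le_ncard hsub (Set.toFinite _)
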